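/- Let Y be a random vector in ℝ^d with mean μ, covariance Σ, E‖Y-μ‖₂⁴ < ∞, and suppose the kurtosis of all linear forms is bounded by K: for every unit vector v, E⟨Y-μ, v⟩⁴ ≤ K (E⟨Y-μ, v⟩²)². Then ‖E[((Y-μ)(Y-μ)ᵀ)²]‖ ≤ K · tr(Σ) · ‖Σ‖, where ‖·‖ is the operator norm. -/

import Mathlib

open Matrix MeasureTheory ENNReal

/-- Operator (spectral) norm of a real matrix, viewed as a linear map
between Euclidean spaces. -/
noncomputable def opNorm {m n : Type*} [Fintype m] [Fintype n] [DecidableEq n]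
    (A : Matrix m n ℝ) : ℝ :=
  ‖(Matrix.toEuclideanLin A).toContinuousLinearMap‖


-- Cauchy-Schwarz for integrals
lemma cs_integral {Ω : Type*} [MeasurableSpace Ω] (μ : Measure Ω) (f g : Ω → ℝ)
    (hf2 : Integrable (fun ω => f ω ^ 2) μ) (hg2 : Integrable (fun ω => g ω ^ 2) μ)
    (hfg : Integrable (fun ω => f ω * g ω) μ) :
    (∫ ω, f ω * g ω ∂μ) ^ 2 ≤ (∫ ω, f ω ^ 2 ∂μ) * (∫ ω, g ω ^ 2 ∂μ) := by
  have key : ∀ t : ℝ, 0 ≤ (∫ ω, f ω ^ 2 ∂μ) * (t * t) + (2 * ∫ ω, f ω * g ω ∂μ) * t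
      + (∫ ω, g ω ^ 2 ∂μ) := by
    intro t
    have h1 : Integrable (fun ω => t ^ 2 * f ω ^ 2 + (2 * t) * (f ω * g ω)) μ :=
      (hf2.const_mul _).add (hfg.const_mul _)
    have h2 : (∫ ω, (t * f ω + g ω) ^ 2 ∂μ)
        = (∫ ω, f ω ^ 2 ∂μ) * (t * t) + (2 * ∫ ω, f ω * g ω ∂μ) * t + (∫ ω, g ω ^ 2 ∂μ) := by
      have : (fun ω => (t * f ω + g ω) ^ 2)
          = fun ω => (t ^ 2 * f ω ^ 2 + (2 * t) * (f ω * g ω)) + g ω ^ 2 := by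
        funext ω; ring
      rw [this, integral_add h1 hg2, integral_add (hf2.const_mul _) (hfg.const_mul _),
        integral_const_mul, integral_const_mul]
      ring
    rw [← h2]
    exact integral_nonneg fun ω => sq_nonneg _
  have := discrim_le_zero key
  rw [discrim] at this
  nlinarith [this]

lemma quarter_add : (1:ℝ≥0∞)/2 = 1/4 + 1/4 := by
  rw [ENNReal.div_add_div_same]
  rw [ENNReal.eq_div_iff (by norm_num) (by norm_num)]
  norm_num
  rw [show (4:ℝ≥0∞) = 2*2 by norm_num, mul_assoc,
    ENNReal.mul_inv_cancel (by norm_num) (by norm_num), mul_one]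

lemma half_add : (1:ℝ≥0∞)/1 = 1/2 + 1/2 := by
  rw [ENNReal.div_add_div_same, show (1:ℝ≥0∞)+1 = 2 by norm_num,
    ENNReal.div_self (by norm_num) (by norm_num),
    ENNReal.div_self (by norm_num) (by norm_num)]

section Aux
variable {Ω : Type*} [MeasurableSpace Ω] {μ : Measure Ω}

lemma memLp_mul2 {f g : Ω → ℝ} (hf : MemLp f 4 μ) (hg : MemLp g 4 μ) :
    MemLp (fun ω => f ω * g ω) 2 μ := by
  have : ENNReal.HolderTriple 4 4 2 := ⟨by simpa only [one_div] using quarter_add.symm⟩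
  have h := hg.smul hf (r := 2)
  exact h

lemma integrable_mul2 {f g : Ω → ℝ} (hf : MemLp f 2 μ) (hg : MemLp g 2 μ) :
    Integrable (fun ω => f ω * g ω) μ := by
  have : ENNReal.HolderTriple 2 2 1 := ⟨by simpa only [one_div] using half_add.symm⟩
  have h := hg.smul hf (r := 1)
  have h2 : MemLp (fun ω => f ω * g ω) 1 μ := by
    exact h
  exact memLp_one_iff_integrable.mp h2

end Aux


lemma quadform_le_opNorm {d : ℕ} (A : Matrix (Fin d) (Fin d) ℝ) (v : Fin d → ℝ) :
    v ⬝ᵥ A *ᵥ v ≤ opNorm A * ∑ i, v i ^ 2 := by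
  set vE : EuclideanSpace ℝ (Fin d) := (WithLp.equiv 2 _).symm v with hvE
  have h1 : v ⬝ᵥ A *ᵥ v = inner ℝ vE ((Matrix.toEuclideanLin A).toContinuousLinearMap vE) := by
    simp only [LinearMap.coe_toContinuousLinearMap', Matrix.toEuclideanLin_apply]
    rw [PiLp.inner_apply]
    simp [dotProduct, hvE, RCLike.inner_apply, mul_comm]
  have h2 : ‖vE‖ ^ 2 = ∑ i, v i ^ 2 := by
    rw [EuclideanSpace.norm_eq, Real.sq_sqrt (by positivity)]
    simp [hvE, sq_abs]
  rw [h1, ← h2]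
  calc inner ℝ vE ((Matrix.toEuclideanLin A).toContinuousLinearMap vE)
      ≤ ‖vE‖ * ‖(Matrix.toEuclideanLin A).toContinuousLinearMap vE‖ := real_inner_le_norm _ _
    _ ≤ ‖vE‖ * (opNorm A * ‖vE‖) := by
        exact mul_le_mul_of_nonneg_left (ContinuousLinearMap.le_opNorm _ _) (norm_nonneg _)
    _ = opNorm A * ‖vE‖ ^ 2 := by ring

lemma opNorm_le_of_quadform {d : ℕ} (A : Matrix (Fin d) (Fin d) ℝ) (C : ℝ) (hC : 0 ≤ C)
    (hsym : ∀ i j, A i j = A j i)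
    (h0 : ∀ v : Fin d → ℝ, 0 ≤ v ⬝ᵥ A *ᵥ v)
    (hub : ∀ v : Fin d → ℝ, (∑ i, v i ^ 2) = 1 → v ⬝ᵥ A *ᵥ v ≤ C) :
    opNorm A ≤ C := by
  -- swap lemma
  have hswap : ∀ u v : Fin d → ℝ, u ⬝ᵥ A *ᵥ v = v ⬝ᵥ A *ᵥ u := by
    intro u v
    simp only [dotProduct, mulVec, Finset.mul_sum]
    rw [Finset.sum_comm]
    exact Finset.sum_congr rfl fun i _ => Finset.sum_congr rfl fun j _ => by
      rw [hsym j i]; ring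
  -- general upper bound by homogeneity
  have hub' : ∀ v : Fin d → ℝ, v ⬝ᵥ A *ᵥ v ≤ C * ∑ i, v i ^ 2 := by
    intro v
    by_cases hv : (∑ i, v i ^ 2) = 0
    · have hvz : v = 0 := by
        funext i
        have := (Finset.sum_eq_zero_iff_of_nonneg (fun i _ => sq_nonneg (v i))).mp hv i
          (Finset.mem_univ i)
        exact pow_eq_zero_iff (by norm_num) |>.mp this
      simp [hvz, hv]
    · have hpos : 0 < ∑ i, v i ^ 2 :=
        lt_of_le_of_ne (Finset.sum_nonneg fun i _ => sq_nonneg _) (Ne.symm hv)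
      set t : ℝ := Real.sqrt (∑ i, v i ^ 2) with ht
      have htpos : 0 < t := Real.sqrt_pos.mpr hpos
      have ht2 : t ^ 2 = ∑ i, v i ^ 2 := Real.sq_sqrt hpos.le
      have hu : (∑ i, (t⁻¹ • v) i ^ 2) = 1 := by
        simp only [Pi.smul_apply, smul_eq_mul, mul_pow, ← Finset.mul_sum]
        rw [← ht2]; field_simp
      have := hub (t⁻¹ • v) hu
      have hexp : (t⁻¹ • v) ⬝ᵥ A *ᵥ (t⁻¹ • v) = t⁻¹ * (t⁻¹ * (v ⬝ᵥ A *ᵥ v)) := by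
        rw [Matrix.mulVec_smul, smul_dotProduct, dotProduct_smul]
        simp [smul_eq_mul]
      rw [hexp] at this
      have h3 : v ⬝ᵥ A *ᵥ v ≤ C * t ^ 2 := by
        have h4 := mul_le_mul_of_nonneg_left this (le_of_lt (mul_pos htpos htpos))
        calc v ⬝ᵥ A *ᵥ v = (t * t) * (t⁻¹ * (t⁻¹ * (v ⬝ᵥ A *ᵥ v))) := by
              field_simp
          _ ≤ (t * t) * C := h4
          _ = C * t ^ 2 := by ring
      rwa [ht2] at h3
  -- Cauchy-Schwarz for the bilinear form
  have hcs : ∀ u v : Fin d → ℝ, (u ⬝ᵥ A *ᵥ v) ^ 2 ≤ (u ⬝ᵥ A *ᵥ u) * (v ⬝ᵥ A *ᵥ v) := by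
    intro u v
    have key : ∀ s : ℝ, 0 ≤ (v ⬝ᵥ A *ᵥ v) * (s * s) + (2 * (u ⬝ᵥ A *ᵥ v)) * s
        + (u ⬝ᵥ A *ᵥ u) := by
      intro s
      have hexp : (u + s • v) ⬝ᵥ A *ᵥ (u + s • v)
          = (v ⬝ᵥ A *ᵥ v) * (s * s) + (2 * (u ⬝ᵥ A *ᵥ v)) * s + (u ⬝ᵥ A *ᵥ u) := by
        simp only [Matrix.mulVec_add, Matrix.mulVec_smul, add_dotProduct,
          dotProduct_add, smul_dotProduct, dotProduct_smul,
          smul_eq_mul]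
        rw [hswap v u]
        ring
      rw [← hexp]; exact h0 _
    have hd := discrim_le_zero key
    rw [discrim] at hd
    nlinarith [hd]
  -- bound mulVec norm
  have hmv : ∀ v : Fin d → ℝ, ∑ i, (A *ᵥ v) i ^ 2 ≤ C ^ 2 * ∑ i, v i ^ 2 := by
    intro v
    set w := A *ᵥ v with hw
    have h1 : ∑ i, w i ^ 2 = w ⬝ᵥ A *ᵥ v := by
      simp [dotProduct, hw, sq]
    have h2 : (w ⬝ᵥ A *ᵥ v) ^ 2 ≤ (C * ∑ i, w i ^ 2) * (C * ∑ i, v i ^ 2) := by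
      calc (w ⬝ᵥ A *ᵥ v) ^ 2 ≤ (w ⬝ᵥ A *ᵥ w) * (v ⬝ᵥ A *ᵥ v) := hcs w v
        _ ≤ (C * ∑ i, w i ^ 2) * (C * ∑ i, v i ^ 2) :=
            mul_le_mul (hub' w) (hub' v) (h0 v) (le_trans (h0 w) (hub' w))
    rw [← h1] at h2
    have hwnn : (0:ℝ) ≤ ∑ i, w i ^ 2 := Finset.sum_nonneg fun i _ => sq_nonneg _
    rcases eq_or_lt_of_le hwnn with h | h
    · rw [← h]; positivity
    · nlinarith [h2]
  rw [opNorm]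
  apply ContinuousLinearMap.opNorm_le_bound _ hC
  intro x
  simp only [LinearMap.coe_toContinuousLinearMap']
  rw [EuclideanSpace.norm_eq, EuclideanSpace.norm_eq]
  have happ : ∀ i, ‖(Matrix.toEuclideanLin A x) i‖ ^ 2 = (A *ᵥ (fun j => x j)) i ^ 2 := by
    intro i
    rw [Matrix.toEuclideanLin_apply]
    simp only [Real.norm_eq_abs, sq_abs]
  calc Real.sqrt (∑ i, ‖(Matrix.toEuclideanLin A x) i‖ ^ 2)
      = Real.sqrt (∑ i, (A *ᵥ (fun j => x j)) i ^ 2) := by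
        congr 1; exact Finset.sum_congr rfl fun i _ => happ i
    _ ≤ Real.sqrt (C ^ 2 * ∑ i, (fun j => x j) i ^ 2) := Real.sqrt_le_sqrt (hmv _)
    _ = C * Real.sqrt (∑ i, ‖x i‖ ^ 2) := by
        rw [Real.sqrt_mul (sq_nonneg C), Real.sqrt_sq hC]
        simp [Real.norm_eq_abs, sq_abs]

theorem aux_main {d : ℕ} {Ω : Type*} [MeasurableSpace Ω] (μ : Measure Ω)
    [IsProbabilityMeasure μ]
    (x : Fin d → Ω → ℝ) (hx4 : ∀ i, MemLp (x i) 4 μ)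
    (S Q : Matrix (Fin d) (Fin d) ℝ)
    (hS : ∀ i j, S i j = ∫ ω, x i ω * x j ω ∂μ)
    (hQ : ∀ i j, Q i j = ∫ ω, ∑ k, (x i ω * x k ω) * (x k ω * x j ω) ∂μ)
    (K : ℝ)
    (hkurt : ∀ v : Fin d → ℝ, (∑ i, v i ^ 2) = 1 →
      ∫ ω, (∑ i, x i ω * v i) ^ 4 ∂μ ≤ K * (∫ ω, (∑ i, x i ω * v i) ^ 2 ∂μ) ^ 2) :
    opNorm Q ≤ K * S.trace * opNorm S := by
  classical
  have hx2 : ∀ i, MemLp (x i) 2 μ := fun i =>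
    (hx4 i).mono_exponent (by norm_num)
  have hmul2 : ∀ i j, MemLp (fun ω => x i ω * x j ω) 2 μ := fun i j =>
    memLp_mul2 (hx4 i) (hx4 j)
  have hint2 : ∀ i j, Integrable (fun ω => x i ω * x j ω) μ := fun i j =>
    integrable_mul2 (hx2 i) (hx2 j)
  have hint4 : ∀ i j k l,
      Integrable (fun ω => (x i ω * x j ω) * (x k ω * x l ω)) μ := fun i j k l =>
    integrable_mul2 (hmul2 i j) (hmul2 k l)
  -- membership of linear combinations
  have hW4 : ∀ v : Fin d → ℝ, MemLp (fun ω => ∑ i, x i ω * v i) 4 μ := by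
    intro v
    exact memLp_finsetSum Finset.univ (f := fun i ω => x i ω * v i)
      (fun i _ => by simpa [mul_comm] using (hx4 i).const_mul (v i))
  have hW2sq : ∀ v : Fin d → ℝ,
      MemLp (fun ω => (∑ i, x i ω * v i) * (∑ i, x i ω * v i)) 2 μ := fun v =>
    memLp_mul2 (hW4 v) (hW4 v)
  -- Identity 1 : quadratic form of S
  have hSform : ∀ v : Fin d → ℝ,
      (∫ ω, (∑ i, x i ω * v i) ^ 2 ∂μ) = v ⬝ᵥ S *ᵥ v := by
    intro v
    have hint_ij : ∀ i j, Integrable (fun ω => (v i * v j) * (x i ω * x j ω)) μ :=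
      fun i j => (hint2 i j).const_mul _
    have e1 : (fun ω => (∑ i, x i ω * v i) ^ 2)
        = fun ω => ∑ i, ∑ j, (v i * v j) * (x i ω * x j ω) := by
      funext ω
      rw [sq, Finset.sum_mul_sum]
      exact Finset.sum_congr rfl fun i _ => Finset.sum_congr rfl fun j _ => by ring
    rw [e1, integral_finset_sum _ (fun i _ => integrable_finset_sum _ fun j _ => hint_ij i j)]
    have e2 : ∀ i, (∫ ω, ∑ j, (v i * v j) * (x i ω * x j ω) ∂μ)
        = ∑ j, (v i * v j) * ∫ ω, x i ω * x j ω ∂μ := by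
      intro i
      rw [integral_finset_sum _ (fun j _ => hint_ij i j)]
      exact Finset.sum_congr rfl fun j _ => integral_const_mul _ _
    simp only [e2, dotProduct, mulVec, hS]
    refine Finset.sum_congr rfl fun i _ => ?_
    rw [Finset.mul_sum]
    exact Finset.sum_congr rfl fun j _ => by ring
  -- Identity 2 : quadratic form of Q
  have key2 : ∀ (k : Fin d) (v : Fin d → ℝ),
      (∫ ω, (x k ω * x k ω) * ((∑ i, x i ω * v i) * (∑ i, x i ω * v i)) ∂μ)
      = ∑ i, ∑ j, (v i * v j) * ∫ ω, (x i ω * x k ω) * (x k ω * x j ω) ∂μ := by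
    intro k v
    have hint_ij : ∀ i j,
        Integrable (fun ω => (v i * v j) * ((x i ω * x k ω) * (x k ω * x j ω))) μ :=
      fun i j => (hint4 i k k j).const_mul _
    have e1 : (fun ω => (x k ω * x k ω) * ((∑ i, x i ω * v i) * (∑ i, x i ω * v i)))
        = fun ω => ∑ i, ∑ j, (v i * v j) * ((x i ω * x k ω) * (x k ω * x j ω)) := by
      funext ω
      rw [Finset.sum_mul_sum, Finset.mul_sum]
      refine Finset.sum_congr rfl fun i _ => ?_
      rw [Finset.mul_sum]
      exact Finset.sum_congr rfl fun j _ => by ring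
    rw [e1, integral_finset_sum _ (fun i _ => integrable_finset_sum _ fun j _ => hint_ij i j)]
    refine Finset.sum_congr rfl fun i _ => ?_
    rw [integral_finset_sum _ (fun j _ => hint_ij i j)]
    exact Finset.sum_congr rfl fun j _ => integral_const_mul _ _
  have hQform : ∀ v : Fin d → ℝ,
      v ⬝ᵥ Q *ᵥ v
      = ∑ k, ∫ ω, (x k ω * x k ω) * ((∑ i, x i ω * v i) * (∑ i, x i ω * v i)) ∂μ := by
    intro v
    have hQe : ∀ i j, Q i j = ∑ k, ∫ ω, (x i ω * x k ω) * (x k ω * x j ω) ∂μ := by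
      intro i j
      rw [hQ i j]
      exact integral_finset_sum _ fun k _ => hint4 i k k j
    simp only [dotProduct, mulVec, hQe]
    calc ∑ i, v i * ∑ j, (∑ k, ∫ ω, (x i ω * x k ω) * (x k ω * x j ω) ∂μ) * v j
        = ∑ i, ∑ j, ∑ k, (v i * v j) * ∫ ω, (x i ω * x k ω) * (x k ω * x j ω) ∂μ := by
          refine Finset.sum_congr rfl fun i _ => ?_
          rw [Finset.mul_sum]
          refine Finset.sum_congr rfl fun j _ => ?_
          rw [Finset.sum_mul, Finset.mul_sum]
          exact Finset.sum_congr rfl fun k _ => by ring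
      _ = ∑ k, ∑ i, ∑ j, (v i * v j) * ∫ ω, (x i ω * x k ω) * (x k ω * x j ω) ∂μ := by
          have h1 : ∀ i : Fin d,
              (∑ j, ∑ k, (v i * v j) * ∫ ω, (x i ω * x k ω) * (x k ω * x j ω) ∂μ)
              = ∑ k, ∑ j, (v i * v j) * ∫ ω, (x i ω * x k ω) * (x k ω * x j ω) ∂μ :=
            fun i => Finset.sum_comm
          simp only [h1]
          exact Finset.sum_comm
      _ = ∑ k, ∫ ω, (x k ω * x k ω) * ((∑ i, x i ω * v i) * (∑ i, x i ω * v i)) ∂μ := by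
          exact Finset.sum_congr rfl fun k _ => (key2 k v).symm
  -- nonnegativity and symmetry of Q
  have hQpos : ∀ v : Fin d → ℝ, 0 ≤ v ⬝ᵥ Q *ᵥ v := by
    intro v
    rw [hQform v]
    exact Finset.sum_nonneg fun k _ => integral_nonneg fun ω =>
      mul_nonneg (mul_self_nonneg _) (mul_self_nonneg _)
  have hQsym : ∀ i j, Q i j = Q j i := by
    intro i j
    rw [hQ i j, hQ j i]
    congr 1
    funext ω
    exact Finset.sum_congr rfl fun k _ => by ring
  -- diagonal of S
  have hSdiag : ∀ k, S k k = ∫ ω, x k ω ^ 2 ∂μ := by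
    intro k
    rw [hS k k]
    congr 1
    funext ω
    ring
  have hSdiag_nonneg : ∀ k, 0 ≤ S k k := fun k => by
    rw [hSdiag k]; exact integral_nonneg fun ω => sq_nonneg _
  have htrace : S.trace = ∑ k, S k k := by
    simp [Matrix.trace, Matrix.diag]
  have htrace_nonneg : 0 ≤ S.trace := by
    rw [htrace]; exact Finset.sum_nonneg fun k _ => hSdiag_nonneg k
  -- kurtosis at coordinate vectors
  have hquart : ∀ k, (∫ ω, ((x k ω * x k ω) ^ 2) ∂μ) ≤ K * (S k k) ^ 2 := by
    intro k
    set e : Fin d → ℝ := fun i => if i = k then 1 else 0 with he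
    have hunit : (∑ i, (e i) ^ 2) = 1 := by
      simp [he, Finset.sum_ite_eq']
    have hsum : ∀ ω, (∑ i, x i ω * e i) = x k ω := by
      intro ω
      simp [he, mul_ite, Finset.sum_ite_eq']
    have h := hkurt e hunit
    simp only [hsum] at h
    have e4 : (fun ω => (x k ω * x k ω) ^ 2) = fun ω => x k ω ^ 4 := by
      funext ω; ring
    rw [e4, hSdiag k]
    exact h
  by_cases hdeg : ∀ k, S k k = 0
  · -- degenerate case : everything vanishes
    have hae : ∀ k, x k =ᵐ[μ] 0 := by
      intro k
      have h0 : (∫ ω, x k ω ^ 2 ∂μ) = 0 := by rw [← hSdiag k]; exact hdeg k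
      have hint : Integrable (fun ω => x k ω ^ 2) μ := (hx2 k).integrable_sq
      have h1 := (integral_eq_zero_iff_of_nonneg (fun ω => sq_nonneg (x k ω)) hint).mp h0
      filter_upwards [h1] with ω hω
      exact pow_eq_zero_iff two_ne_zero |>.mp hω
    have hSzero : S = 0 := by
      ext i j
      rw [hS i j]
      have h1 : (fun ω => x i ω * x j ω) =ᵐ[μ] 0 := by
        filter_upwards [hae i] with ω hω
        simp [hω]
      rw [integral_congr_ae h1]
      simp
    have hQzero : Q = 0 := by
      ext i j
      rw [hQ i j]
      have h1 : (fun ω => ∑ k, (x i ω * x k ω) * (x k ω * x j ω)) =ᵐ[μ] 0 := by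
        filter_upwards [hae i] with ω hω
        simp [hω]
      rw [integral_congr_ae h1]
      simp
    rw [hSzero, hQzero]
    have hz : opNorm (0 : Matrix (Fin d) (Fin d) ℝ) = 0 := by
      have h0 : (Matrix.toEuclideanLin (0 : Matrix (Fin d) (Fin d) ℝ)).toContinuousLinearMap = 0 := by
        ext y
        simp
      rw [opNorm, h0, norm_zero]
    rw [hz]
    simp
  · -- nondegenerate case
    push_neg at hdeg
    obtain ⟨k0, hk0⟩ := hdeg
    have hK : 0 ≤ K := by
      have h1 : 0 ≤ ∫ ω, ((x k0 ω * x k0 ω) ^ 2) ∂μ :=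
        integral_nonneg fun ω => sq_nonneg _
      have h2 := hquart k0
      have h3 : 0 < (S k0 k0) ^ 2 := by positivity
      nlinarith
    have hCnn : 0 ≤ K * S.trace * opNorm S :=
      mul_nonneg (mul_nonneg hK htrace_nonneg) (norm_nonneg _)
    have hub : ∀ v : Fin d → ℝ, (∑ i, v i ^ 2) = 1 →
        v ⬝ᵥ Q *ᵥ v ≤ K * S.trace * opNorm S := by
      intro v hv
      have hI2 : (∫ ω, (∑ i, x i ω * v i) ^ 2 ∂μ) = v ⬝ᵥ S *ᵥ v := hSform v
      have hI2nn : 0 ≤ v ⬝ᵥ S *ᵥ v := by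
        rw [← hI2]; exact integral_nonneg fun ω => sq_nonneg _
      have hI4 := hkurt v hv
      rw [hI2] at hI4
      have hk : ∀ k : Fin d,
          (∫ ω, (x k ω * x k ω) * ((∑ i, x i ω * v i) * (∑ i, x i ω * v i)) ∂μ)
          ≤ K * (S k k * (v ⬝ᵥ S *ᵥ v)) := by
        intro k
        have hfsq : Integrable (fun ω => (x k ω * x k ω) ^ 2) μ := by
          have h := hint4 k k k k
          have e : (fun ω => (x k ω * x k ω) * (x k ω * x k ω))
              = fun ω => (x k ω * x k ω) ^ 2 := by funext ω; ring
          rwa [e] at h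
        have hgsq : Integrable
            (fun ω => ((∑ i, x i ω * v i) * (∑ i, x i ω * v i)) ^ 2) μ := by
          have h := integrable_mul2 (hW2sq v) (hW2sq v)
          have e : (fun ω => ((∑ i, x i ω * v i) * (∑ i, x i ω * v i))
                * ((∑ i, x i ω * v i) * (∑ i, x i ω * v i)))
              = fun ω => ((∑ i, x i ω * v i) * (∑ i, x i ω * v i)) ^ 2 := by
            funext ω; ring
          rwa [e] at h
        have hfg : Integrable (fun ω =>
            (x k ω * x k ω) * ((∑ i, x i ω * v i) * (∑ i, x i ω * v i))) μ :=
          integrable_mul2 (hmul2 k k) (hW2sq v)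
        have hcs := cs_integral μ (fun ω => x k ω * x k ω)
          (fun ω => (∑ i, x i ω * v i) * (∑ i, x i ω * v i)) hfsq hgsq hfg
        have hfgnn : 0 ≤ ∫ ω,
            (x k ω * x k ω) * ((∑ i, x i ω * v i) * (∑ i, x i ω * v i)) ∂μ :=
          integral_nonneg fun ω => mul_nonneg (mul_self_nonneg _) (mul_self_nonneg _)
        have h1 := hquart k
        have h2 : (∫ ω, ((∑ i, x i ω * v i) * (∑ i, x i ω * v i)) ^ 2 ∂μ)
            ≤ K * (v ⬝ᵥ S *ᵥ v) ^ 2 := by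
          have e : (fun ω => ((∑ i, x i ω * v i) * (∑ i, x i ω * v i)) ^ 2)
              = fun ω => (∑ i, x i ω * v i) ^ 4 := by funext ω; ring
          rw [e]; exact hI4
        have hBnn : 0 ≤ ∫ ω, (x k ω * x k ω) ^ 2 ∂μ :=
          integral_nonneg fun ω => sq_nonneg _
        have hCnn' : 0 ≤ ∫ ω, ((∑ i, x i ω * v i) * (∑ i, x i ω * v i)) ^ 2 ∂μ :=
          integral_nonneg fun ω => sq_nonneg _
        have hbnn : 0 ≤ K * (S k k) ^ 2 := mul_nonneg hK (sq_nonneg _)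
        have hR : 0 ≤ K * (S k k * (v ⬝ᵥ S *ᵥ v)) :=
          mul_nonneg hK (mul_nonneg (hSdiag_nonneg k) hI2nn)
        nlinarith [hcs, h1, h2, hBnn, hCnn', hbnn, hR, hfgnn,
          mul_le_mul h1 h2 hCnn' hbnn]
      calc v ⬝ᵥ Q *ᵥ v
          = ∑ k, ∫ ω, (x k ω * x k ω)
              * ((∑ i, x i ω * v i) * (∑ i, x i ω * v i)) ∂μ := hQform v
        _ ≤ ∑ k, K * (S k k * (v ⬝ᵥ S *ᵥ v)) := Finset.sum_le_sum fun k _ => hk k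
        _ = K * S.trace * (v ⬝ᵥ S *ᵥ v) := by
            rw [htrace, ← Finset.mul_sum, ← Finset.sum_mul]
            ring
        _ ≤ K * S.trace * (opNorm S * ∑ i, v i ^ 2) := by
            refine mul_le_mul_of_nonneg_left ?_ (mul_nonneg hK htrace_nonneg)
            have := quadform_le_opNorm S v
            simpa using this
        _ = K * S.trace * opNorm S := by rw [hv, mul_one]
    exact opNorm_le_of_quadform Q _ hCnn hQsym hQpos hub

theorem matrix_variance_upper_bound
    {d : ℕ} {Ω : Type*} [MeasurableSpace Ω] (μ : Measure Ω) [IsProbabilityMeasure μ]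
    (Y : Ω → Fin d → ℝ) (hmeas : Measurable Y)
    (m : Fin d → ℝ) (hm : ∀ i, ∫ ω, Y ω i ∂μ = m i)
    (hL4 : ∀ i, MemLp (fun ω => Y ω i) 4 μ)
    (S : Matrix (Fin d) (Fin d) ℝ)
    (hS : ∀ i j, S i j = ∫ ω, (Y ω i - m i) * (Y ω j - m j) ∂μ)
    (K : ℝ)
    (hkurt : ∀ v : Fin d → ℝ, (∑ i, v i ^ 2) = 1 →
      ∫ ω, (∑ i, (Y ω i - m i) * v i) ^ 4 ∂μ ≤
        K * (∫ ω, (∑ i, (Y ω i - m i) * v i) ^ 2 ∂μ) ^ 2)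
    (Q : Matrix (Fin d) (Fin d) ℝ)
    (hQ : ∀ i j, Q i j = ∫ ω,
      (Matrix.vecMulVec (Y ω - m) (Y ω - m) *
        Matrix.vecMulVec (Y ω - m) (Y ω - m)) i j ∂μ) :
    opNorm Q ≤ K * S.trace * opNorm S := by
  apply aux_main μ (fun i ω => Y ω i - m i)
    (fun i => (hL4 i).sub (memLp_const (m i))) S Q hS
    (fun i j => by
      rw [hQ i j]
      simp only [Matrix.mul_apply, Matrix.vecMulVec_apply, Pi.sub_apply])
    K hkurt
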